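/- Let 2^K < m ≤ 2^{K+1} with K ≥ 0. Then det(a_{i+j+m})_{i,j=0}^{n-1} ∈ {1, -1} if n ≡ 0 (mod 2^{K+1}) or n ≡ -m (mod 2^{K+1}), and det(a_{i+j+m})_{i,j=0}^{n-1} = 0 otherwise. -/

import Mathlib

open Classical in
noncomputable def catMod2 (n : ℕ) : ℤ := if ∃ k : ℕ, n + 1 = 2 ^ k then 1 else 0

noncomputable def dShift (n m : ℕ) : ℤ :=
  Matrix.det (Matrix.of fun i j : Fin n => catMod2 ((i : ℕ) + j + m))

namespace Stmt12Aux

def Valid (m n : ℕ) (σ : Equiv.Perm (Fin n)) : Prop :=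
  ∀ i : Fin n, ∃ k : ℕ, (σ i : ℕ) + (i : ℕ) + m + 1 = 2 ^ k

lemma valid_inv {m n : ℕ} {σ : Equiv.Perm (Fin n)} (h : Valid m n σ) :
    Valid m n σ⁻¹ := by
  intro i
  obtain ⟨k, hk⟩ := h (σ⁻¹ i)
  refine ⟨k, ?_⟩
  rw [show σ (σ⁻¹ i) = i from σ.apply_symm_apply i] at hk
  omega

lemma exists_pow_btwn (q : ℕ) (hq : 1 ≤ q) : ∃ j, q < 2 ^ j ∧ 2 ^ j ≤ 2 * q := by
  refine ⟨Nat.log 2 q + 1, Nat.lt_pow_succ_log_self (by norm_num) q, ?_⟩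
  have h := Nat.pow_log_le_self 2 (by omega : q ≠ 0)
  rw [pow_succ]
  omega

lemma step1 {m n : ℕ} {σ : Equiv.Perm (Fin n)} (hσ : Valid m n σ) (L' : ℕ)
    (hL1 : n + m ≤ 2 * 2 ^ L') (hm : 1 ≤ m)
    (i : Fin n) (hi : 2 ^ L' ≤ (i : ℕ) + m) :
    (σ i : ℕ) + (i : ℕ) + m + 1 = 2 * 2 ^ L' := by
  obtain ⟨k, hk⟩ := hσ i
  have h1 := (σ i).isLt
  have h2 := i.isLt
  have hkL : k = L' + 1 := by
    by_contra hne
    rcases Nat.lt_or_ge k (L' + 1) with h | h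
    · have : 2 ^ k ≤ 2 ^ L' := Nat.pow_le_pow_right (by norm_num) (by omega)
      omega
    · have h3 : L' + 2 ≤ k := by omega
      have h4 : 2 ^ (L' + 2) ≤ 2 ^ k := Nat.pow_le_pow_right (by norm_num) h3
      have h5 : 2 ^ (L' + 2) = 4 * 2 ^ L' := by ring
      omega
  subst hkL
  have : 2 ^ (L' + 1) = 2 * 2 ^ L' := by ring
  omega

lemma forcing {m n : ℕ} {σ : Equiv.Perm (Fin n)} (hσ : Valid m n σ) (L' : ℕ)
    (hL1 : n + m ≤ 2 * 2 ^ L') (hm : 1 ≤ m)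
    (i : Fin n) (hi : 2 * 2 ^ L' ≤ (i : ℕ) + m + n) :
    (σ i : ℕ) + (i : ℕ) + m + 1 = 2 * 2 ^ L' := by
  have h2 := i.isLt
  by_cases hstep : 2 ^ L' ≤ (i : ℕ) + m
  · exact step1 hσ L' hL1 hm i hstep
  · push_neg at hstep
    have hjlt : 2 * 2 ^ L' - m - 1 - (i : ℕ) < n := by omega
    set j : Fin n := ⟨2 * 2 ^ L' - m - 1 - (i : ℕ), hjlt⟩ with hjdef
    have hjval : (j : ℕ) = 2 * 2 ^ L' - m - 1 - (i : ℕ) := rfl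
    have hj : 2 ^ L' ≤ (j : ℕ) + m := by omega
    have hstep2 := step1 (valid_inv hσ) L' hL1 hm j hj
    have hji : σ⁻¹ j = i := by
      apply Fin.ext
      omega
    have hij : σ i = j := by rw [← hji, Equiv.Perm.inv_def, Equiv.apply_symm_apply]
    rw [hij, hjval]
    omega

lemma closure {m n : ℕ} {σ : Equiv.Perm (Fin n)} (hσ : Valid m n σ) (L' : ℕ)
    (hL1 : n + m ≤ 2 * 2 ^ L') (hm : 1 ≤ m)
    (i : Fin n) (hi : (i : ℕ) + m + n < 2 * 2 ^ L') :
    (σ i : ℕ) + m + n < 2 * 2 ^ L' := by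
  by_contra h
  push_neg at h
  have h2 := forcing (valid_inv hσ) L' hL1 hm (σ i) h
  rw [Equiv.Perm.inv_def, Equiv.symm_apply_apply] at h2
  have := (σ i).isLt
  omega

def glue {n n' : ℕ} (hle : n' ≤ n) (σ' : Equiv.Perm (Fin n')) : Equiv.Perm (Fin n) where
  toFun i := if h : (i : ℕ) < n' then
      ⟨(σ' ⟨i, h⟩ : ℕ), lt_of_lt_of_le (σ' ⟨i, h⟩).isLt hle⟩
    else ⟨n + n' - 1 - (i : ℕ), by have := i.isLt; omega⟩
  invFun i := if h : (i : ℕ) < n' then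
      ⟨(σ'.symm ⟨i, h⟩ : ℕ), lt_of_lt_of_le (σ'.symm ⟨i, h⟩).isLt hle⟩
    else ⟨n + n' - 1 - (i : ℕ), by have := i.isLt; omega⟩
  left_inv := by
    intro i
    dsimp only
    by_cases h : (i : ℕ) < n'
    · rw [dif_pos h]
      dsimp only
      have hlt : (σ' ⟨i, h⟩ : ℕ) < n' := (σ' ⟨i, h⟩).isLt
      rw [dif_pos hlt]
      apply Fin.ext
      simp
    · rw [dif_neg h]
      have := i.isLt
      have hge : ¬ (n + n' - 1 - (i : ℕ) < n') := by omega
      dsimp only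
      rw [dif_neg hge]
      apply Fin.ext
      simp
      omega
  right_inv := by
    intro i
    dsimp only
    by_cases h : (i : ℕ) < n'
    · rw [dif_pos h]
      dsimp only
      have hlt : (σ'.symm ⟨i, h⟩ : ℕ) < n' := (σ'.symm ⟨i, h⟩).isLt
      rw [dif_pos hlt]
      apply Fin.ext
      simp
    · rw [dif_neg h]
      have := i.isLt
      have hge : ¬ (n + n' - 1 - (i : ℕ) < n') := by omega
      dsimp only
      rw [dif_neg hge]
      apply Fin.ext
      simp
      omega

lemma glue_apply_lt {n n' : ℕ} (hle : n' ≤ n) (σ' : Equiv.Perm (Fin n')) (i : Fin n)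
    (h : (i : ℕ) < n') : ((glue hle σ') i : ℕ) = (σ' ⟨i, h⟩ : ℕ) := by
  show ((if h : (i : ℕ) < n' then _ else _ : Fin n) : ℕ) = _
  rw [dif_pos h]

lemma glue_apply_ge {n n' : ℕ} (hle : n' ≤ n) (σ' : Equiv.Perm (Fin n')) (i : Fin n)
    (h : ¬ (i : ℕ) < n') : ((glue hle σ') i : ℕ) = n + n' - 1 - (i : ℕ) := by
  show ((if h : (i : ℕ) < n' then _ else _ : Fin n) : ℕ) = _
  rw [dif_neg h]

lemma valid_glue {m n n' L' : ℕ} (hm : 1 ≤ m) (hsum : n' + n + m = 2 * 2 ^ L')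
    (hle : n' ≤ n) {σ' : Equiv.Perm (Fin n')} (hσ' : Valid m n' σ') :
    Valid m n (glue hle σ') := by
  intro i
  by_cases h : (i : ℕ) < n'
  · obtain ⟨k, hk⟩ := hσ' ⟨i, h⟩
    refine ⟨k, ?_⟩
    rw [glue_apply_lt hle σ' i h]
    exact hk
  · refine ⟨L' + 1, ?_⟩
    rw [glue_apply_ge hle σ' i h]
    have := i.isLt
    have hp : 2 ^ (L' + 1) = 2 * 2 ^ L' := by ring
    omega

def restrictPerm {m n : ℕ} {σ : Equiv.Perm (Fin n)} (hσ : Valid m n σ) (L' n' : ℕ)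
    (hsum : n' + n + m = 2 * 2 ^ L') (hm : 1 ≤ m) (hle : n' ≤ n) :
    Equiv.Perm (Fin n') where
  toFun i := ⟨(σ (Fin.castLE hle i) : ℕ), by
    have h := closure hσ L' (by omega) hm (Fin.castLE hle i)
      (by have := i.isLt; simp [Fin.coe_castLE]; omega)
    omega⟩
  invFun i := ⟨(σ⁻¹ (Fin.castLE hle i) : ℕ), by
    have h := closure (valid_inv hσ) L' (by omega) hm (Fin.castLE hle i)
      (by have := i.isLt; simp [Fin.coe_castLE]; omega)
    omega⟩
  left_inv := by
    intro i
    apply Fin.ext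
    show (σ⁻¹ (Fin.castLE hle ⟨(σ (Fin.castLE hle i) : ℕ), _⟩) : ℕ) = (i : ℕ)
    have h : Fin.castLE hle (⟨(σ (Fin.castLE hle i) : ℕ), by
        have h := closure hσ L' (by omega) hm (Fin.castLE hle i)
          (by have := i.isLt; simp [Fin.coe_castLE]; omega)
        omega⟩ : Fin n') = σ (Fin.castLE hle i) := by
      apply Fin.ext; rfl
    rw [h, Equiv.Perm.inv_def, Equiv.symm_apply_apply]
    rfl
  right_inv := by
    intro i
    apply Fin.ext
    show (σ (Fin.castLE hle ⟨(σ⁻¹ (Fin.castLE hle i) : ℕ), _⟩) : ℕ) = (i : ℕ)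
    have h : Fin.castLE hle (⟨(σ⁻¹ (Fin.castLE hle i) : ℕ), by
        have h := closure (valid_inv hσ) L' (by omega) hm (Fin.castLE hle i)
          (by have := i.isLt; simp [Fin.coe_castLE]; omega)
        omega⟩ : Fin n') = σ⁻¹ (Fin.castLE hle i) := by
      apply Fin.ext; rfl
    rw [h, Equiv.Perm.inv_def, Equiv.apply_symm_apply]
    rfl

lemma restrict_apply {m n : ℕ} {σ : Equiv.Perm (Fin n)} (hσ : Valid m n σ) (L' n' : ℕ)
    (hsum : n' + n + m = 2 * 2 ^ L') (hm : 1 ≤ m) (hle : n' ≤ n) (i : Fin n') :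
    ((restrictPerm hσ L' n' hsum hm hle) i : ℕ) = (σ (Fin.castLE hle i) : ℕ) := rfl

lemma restrict_valid {m n : ℕ} {σ : Equiv.Perm (Fin n)} (hσ : Valid m n σ) (L' n' : ℕ)
    (hsum : n' + n + m = 2 * 2 ^ L') (hm : 1 ≤ m) (hle : n' ≤ n) :
    Valid m n' (restrictPerm hσ L' n' hsum hm hle) := by
  intro i
  obtain ⟨k, hk⟩ := hσ (Fin.castLE hle i)
  refine ⟨k, ?_⟩
  rw [restrict_apply]
  simpa [Fin.coe_castLE] using hk

lemma Cc_iff (K m : ℕ) (h1 : 2 ^ K < m) (n n' L' : ℕ)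
    (hsum : n' + n + m = 2 * 2 ^ L') :
    (2 ^ (K+1) ∣ n ∨ 2 ^ (K+1) ∣ (n + m)) ↔ (2 ^ (K+1) ∣ n' ∨ 2 ^ (K+1) ∣ (n' + m)) := by
  have hK : K + 1 ≤ L' + 1 := by
    by_contra h
    push_neg at h
    have h3 : 2 ^ (L' + 1) ≤ 2 ^ K := Nat.pow_le_pow_right (by norm_num) (by omega)
    have h4 : 2 ^ (L' + 1) = 2 * 2 ^ L' := by ring
    omega
  have hdvd : 2 ^ (K+1) ∣ 2 * 2 ^ L' := by
    have h4 : 2 * 2 ^ L' = 2 ^ (L' + 1) := by ring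
    rw [h4]
    exact pow_dvd_pow 2 hK
  have htot : 2 ^ (K+1) ∣ n' + n + m := hsum ▸ hdvd
  constructor
  · rintro (h | h)
    · right
      have hd := Nat.dvd_sub htot h
      have he : n' + n + m - n = n' + m := by omega
      rwa [he] at hd
    · left
      have hd := Nat.dvd_sub htot h
      have he : n' + n + m - (n + m) = n' := by omega
      rwa [he] at hd
  · rintro (h | h)
    · right
      have hd := Nat.dvd_sub htot h
      have he : n' + n + m - n' = n + m := by omega
      rwa [he] at hd
    · left
      have hd := Nat.dvd_sub htot h
      have he : n' + n + m - (n' + m) = n := by omega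
      rwa [he] at hd

lemma existsL (K m : ℕ) (h1 : 2 ^ K < m) (h2 : m ≤ 2 ^ (K + 1)) (n : ℕ) (hn : 1 ≤ n)
    (hC : 2 ^ (K+1) ∣ n ∨ 2 ^ (K+1) ∣ (n + m)) :
    ∃ L', n + m ≤ 2 * 2 ^ L' ∧ 2 * 2 ^ L' ≤ 2 * n + m - 1 := by
  have hm : 1 ≤ m := by have := Nat.two_pow_pos K; omega
  have hA : 0 < 2 ^ (K+1) := Nat.two_pow_pos _
  rcases hC with ⟨q, hq⟩ | ⟨q, hq⟩
  · have hq1 : 1 ≤ q := by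
      rcases Nat.eq_zero_or_pos q with h | h
      · subst h; omega
      · exact h
    obtain ⟨j, hj1, hj2⟩ := exists_pow_btwn q hq1
    have hpow : 2 * 2 ^ (j + K) = 2 ^ j * 2 ^ (K+1) := by
      rw [pow_add, pow_succ]; ring
    refine ⟨j + K, ?_, ?_⟩
    · rw [hpow]
      calc n + m ≤ 2 ^ (K+1) * q + 2 ^ (K+1) := by omega
        _ = 2 ^ (K+1) * (q + 1) := by ring
        _ ≤ 2 ^ (K+1) * 2 ^ j := Nat.mul_le_mul_left _ hj1
        _ = 2 ^ j * 2 ^ (K+1) := by ring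
    · rw [hpow]
      calc 2 ^ j * 2 ^ (K+1) ≤ (2 * q) * 2 ^ (K+1) := Nat.mul_le_mul_right _ hj2
        _ = 2 * (2 ^ (K+1) * q) := by ring
        _ ≤ 2 * n + m - 1 := by omega
  · have hq1 : 1 ≤ q := by
      rcases Nat.eq_zero_or_pos q with h | h
      · subst h; omega
      · exact h
    rcases Nat.lt_or_ge q 2 with hq2 | hq2
    · -- q = 1
      have hqe : q = 1 := by omega
      subst hqe
      refine ⟨K, ?_, ?_⟩
      · have h4 : 2 * 2 ^ K = 2 ^ (K+1) := by ring
        omega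
      · have h4 : 2 * 2 ^ K = 2 ^ (K+1) := by ring
        omega
    · obtain ⟨r, rfl⟩ : ∃ r, q = r + 2 := ⟨q - 2, by omega⟩
      obtain ⟨j, hj1, hj2⟩ := exists_pow_btwn (r + 1) (by omega)
      have hpow : 2 * 2 ^ (j + K) = 2 ^ j * 2 ^ (K+1) := by
        rw [pow_add, pow_succ]; ring
      refine ⟨j + K, ?_, ?_⟩
      · rw [hpow]
        calc n + m = 2 ^ (K+1) * (r + 2) := hq
          _ ≤ 2 ^ (K+1) * 2 ^ j := Nat.mul_le_mul_left _ (by omega)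
          _ = 2 ^ j * 2 ^ (K+1) := by ring
      · rw [hpow]
        have hmul : (2 * (r + 1)) * 2 ^ (K+1) + 2 * 2 ^ (K+1) = 2 * (2 ^ (K+1) * (r + 2)) := by
          ring
        calc 2 ^ j * 2 ^ (K+1) ≤ (2 * (r + 1)) * 2 ^ (K+1) := Nat.mul_le_mul_right _ hj2
          _ ≤ 2 * n + m - 1 := by omega

lemma main (K m : ℕ) (h1 : 2 ^ K < m) (h2 : m ≤ 2 ^ (K + 1)) : ∀ n : ℕ,
    ((2 ^ (K+1) ∣ n ∨ 2 ^ (K+1) ∣ (n + m)) → ∃! σ : Equiv.Perm (Fin n), Valid m n σ) ∧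
    (¬(2 ^ (K+1) ∣ n ∨ 2 ^ (K+1) ∣ (n + m)) → ∀ σ : Equiv.Perm (Fin n), ¬ Valid m n σ) := by
  have hm : 1 ≤ m := by have := Nat.two_pow_pos K; omega
  intro n
  induction n using Nat.strong_induction_on with
  | _ n IH =>
  rcases Nat.eq_zero_or_pos n with hn0 | hn
  · subst hn0
    constructor
    · intro _
      exact ⟨1, fun i => i.elim0, fun τ _ => Equiv.ext fun i => i.elim0⟩
    · intro h
      exact absurd (Or.inl (dvd_zero _)) h
  · constructor
    · intro hC
      obtain ⟨L', hL1, hL2⟩ := existsL K m h1 h2 n hn hC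
      set n' := 2 * 2 ^ L' - m - n with hn'
      have hsum : n' + n + m = 2 * 2 ^ L' := by omega
      have hlt : n' < n := by omega
      have hCiff := Cc_iff K m h1 n n' L' hsum
      obtain ⟨σ', hσ', huniq'⟩ := (IH n' hlt).1 (hCiff.mp hC)
      refine ⟨glue hlt.le σ', valid_glue hm hsum hlt.le hσ', ?_⟩
      intro τ hτ
      have hres := huniq' (restrictPerm hτ L' n' hsum hm hlt.le)
        (restrict_valid hτ L' n' hsum hm hlt.le)
      apply Equiv.ext
      intro i
      apply Fin.ext
      by_cases h : (i : ℕ) < n'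
      · have hv := congrArg (fun σ : Equiv.Perm (Fin n') => ((σ ⟨(i : ℕ), h⟩ : Fin n') : ℕ)) hres
        rw [restrict_apply] at hv
        have hcast : Fin.castLE hlt.le (⟨(i : ℕ), h⟩ : Fin n') = i := by
          apply Fin.ext; rfl
        rw [hcast] at hv
        rw [glue_apply_lt hlt.le σ' i h]
        exact hv
      · have hf := forcing hτ L' hL1 hm i (by have := i.isLt; omega)
        rw [glue_apply_ge hlt.le σ' i h]
        have := i.isLt
        omega
    · intro hC σ hσ
      obtain ⟨k, hk⟩ := hσ ⟨n - 1, by omega⟩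
      have hc1 : ((⟨n - 1, by omega⟩ : Fin n) : ℕ) = n - 1 := rfl
      have hval := (σ ⟨n - 1, by omega⟩).isLt
      rw [hc1] at hk
      have hk1 : 1 ≤ k := by
        by_contra h
        push_neg at h
        interval_cases k <;> omega
      obtain ⟨L', rfl⟩ : ∃ L', k = L' + 1 := ⟨k - 1, by omega⟩
      have hp : 2 ^ (L' + 1) = 2 * 2 ^ L' := by ring
      have hL1 : n + m ≤ 2 * 2 ^ L' := by omega
      have hL2 : 2 * 2 ^ L' ≤ 2 * n + m - 1 := by omega
      set n' := 2 * 2 ^ L' - m - n with hn'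
      have hsum : n' + n + m = 2 * 2 ^ L' := by omega
      have hlt : n' < n := by omega
      have hCiff := Cc_iff K m h1 n n' L' hsum
      exact (IH n' hlt).2 (fun hd => hC (hCiff.mpr hd))
        (restrictPerm hσ L' n' hsum hm hlt.le)
        (restrict_valid hσ L' n' hsum hm hlt.le)

lemma dShift_eq_sum (n m : ℕ) :
    dShift n m = ∑ σ : Equiv.Perm (Fin n),
      (Equiv.Perm.sign σ : ℤ) * ∏ i : Fin n, catMod2 ((σ i : ℕ) + (i : ℕ) + m) := by
  rw [dShift, Matrix.det_apply]
  refine Finset.sum_congr rfl fun σ _ => ?_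
  rw [Units.smul_def]
  simp [Matrix.of_apply]

lemma prod_one {m n : ℕ} {σ : Equiv.Perm (Fin n)} (h : Valid m n σ) :
    ∏ i : Fin n, catMod2 ((σ i : ℕ) + (i : ℕ) + m) = 1 := by
  apply Finset.prod_eq_one
  intro i _
  unfold catMod2
  rw [if_pos]
  exact h i

lemma prod_zero {m n : ℕ} {σ : Equiv.Perm (Fin n)} (h : ¬ Valid m n σ) :
    ∏ i : Fin n, catMod2 ((σ i : ℕ) + (i : ℕ) + m) = 0 := by
  rw [Valid] at h
  push_neg at h
  obtain ⟨i, hi⟩ := h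
  apply Finset.prod_eq_zero (Finset.mem_univ i)
  unfold catMod2
  rw [if_neg]
  rintro ⟨k, hk⟩
  exact hi k hk

end Stmt12Aux

theorem stmt12 (K m n : ℕ) (h1 : 2 ^ K < m) (h2 : m ≤ 2 ^ (K + 1)) :
    (n % 2 ^ (K + 1) = 0 ∨ (n + m) % 2 ^ (K + 1) = 0 →
      dShift n m = 1 ∨ dShift n m = -1) ∧
    (¬(n % 2 ^ (K + 1) = 0 ∨ (n + m) % 2 ^ (K + 1) = 0) → dShift n m = 0) := by
  have hmain := Stmt12Aux.main K m h1 h2 n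
  have hA : 0 < 2 ^ (K + 1) := Nat.two_pow_pos _
  have hdvd : (n % 2 ^ (K + 1) = 0 ∨ (n + m) % 2 ^ (K + 1) = 0) ↔
      (2 ^ (K+1) ∣ n ∨ 2 ^ (K+1) ∣ (n + m)) := by
    rw [Nat.dvd_iff_mod_eq_zero, Nat.dvd_iff_mod_eq_zero]
  constructor
  · intro hC
    obtain ⟨σ0, hσ0, huniq⟩ := hmain.1 (hdvd.mp hC)
    have hdet : dShift n m = ((Equiv.Perm.sign σ0 : ℤˣ) : ℤ) := by
      rw [Stmt12Aux.dShift_eq_sum]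
      rw [Finset.sum_eq_single σ0]
      · rw [Stmt12Aux.prod_one hσ0, mul_one]
      · intro τ _ hne
        rw [Stmt12Aux.prod_zero (fun hv => hne (huniq τ hv)), mul_zero]
      · intro h
        exact absurd (Finset.mem_univ σ0) h
    rcases Int.units_eq_one_or (Equiv.Perm.sign σ0) with h | h
    · left; rw [hdet, h]; rfl
    · right; rw [hdet, h]; rfl
  · intro hC
    rw [Stmt12Aux.dShift_eq_sum]
    apply Finset.sum_eq_zero
    intro σ _
    rw [Stmt12Aux.prod_zero (hmain.2 (fun hd => hC (hdvd.mpr hd)) σ), mul_zero]
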